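/- Let S ⊆ B(H)_sa be an invex set with respect to η : S × S → B(H)_sa satisfying condition C, let f : ℝ → ℝ be continuous, let A, B ∈ S and V := A + η(B,A). If for every x ∈ H with ‖x‖ = 1 the function φ_{x,A,B} : [0,1] → ℝ defined by φ_{x,A,B}(t) := ⟨f(A + tη(B,A))x, x⟩ is convex on [0,1], then f is operator preinvex with respect to η on the η-path P_AV. -/

import Mathlib

open scoped InnerProductSpace

section Aux

variable {H : Type*} [NormedAddCommGroup H] [InnerProductSpace ℂ H] [CompleteSpace H]

private lemma aux_sa_smul (r : ℝ) (T : H →L[ℂ] H) (hT : IsSelfAdjoint T) :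
    IsSelfAdjoint (r • T) := by
  rw [RCLike.real_smul_eq_coe_smul (K := ℂ), IsSelfAdjoint, star_smul, hT.star_eq,
    RCLike.star_def, RCLike.conj_ofReal]

private lemma aux_re_smul (r : ℝ) (T : H →L[ℂ] H) (x y : H) :
    RCLike.re ⟪(r • T) x, y⟫_ℂ = r * RCLike.re ⟪T x, y⟫_ℂ := by
  rw [ContinuousLinearMap.smul_apply, RCLike.real_smul_eq_coe_smul (K := ℂ),
    inner_smul_real_left, RCLike.smul_re]

end Aux

set_option maxHeartbeats 1000000 in
/-- If for every unit vector `x` the function `t ↦ ⟨f(A + tη(B,A))x, x⟩`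
is convex on `[0,1]`, then `f` is operator preinvex with respect to `η` on the η-path `P_AV`. -/
theorem phi_convex_implies_operator_preinvex
    {H : Type*} [NormedAddCommGroup H] [InnerProductSpace ℂ H] [CompleteSpace H]
    (S : Set (H →L[ℂ] H)) (hSsa : ∀ A ∈ S, IsSelfAdjoint A)
    (η : (H →L[ℂ] H) → (H →L[ℂ] H) → (H →L[ℂ] H))
    (hinvex : ∀ A ∈ S, ∀ B ∈ S, ∀ t ∈ Set.Icc (0:ℝ) 1, A + t • η B A ∈ S)
    (hC1 : ∀ A ∈ S, ∀ B ∈ S, ∀ t ∈ Set.Icc (0:ℝ) 1,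
      η A (A + t • η B A) = (-t) • η B A)
    (hC2 : ∀ A ∈ S, ∀ B ∈ S, ∀ t ∈ Set.Icc (0:ℝ) 1,
      η B (A + t • η B A) = (1 - t) • η B A)
    (f : ℝ → ℝ) (hf : Continuous f)
    (A : H →L[ℂ] H) (hA : A ∈ S) (B : H →L[ℂ] H) (hB : B ∈ S)
    (hconv : ∀ x : H, ‖x‖ = 1 →
      ConvexOn ℝ (Set.Icc (0:ℝ) 1)
        (fun t : ℝ => RCLike.re ⟪(cfc f (A + t • η B A)) x, x⟫_ℂ)) :
    -- f is operator preinvex with respect to η on the η-path P_AV,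
    -- where P_AV = {A + t • η B A : t ∈ [0,1]} and V = A + η B A :
    ∀ C₁ ∈ {C | ∃ t ∈ Set.Icc (0:ℝ) 1, C = A + t • η B A},
      ∀ C₂ ∈ {C | ∃ t ∈ Set.Icc (0:ℝ) 1, C = A + t • η B A},
      ∀ lam ∈ Set.Icc (0:ℝ) 1,
        cfc f (C₁ + lam • η C₂ C₁) ≤ (1 - lam) • cfc f C₁ + lam • cfc f C₂ := by
  -- Step 1: along the η-path, η acts affinely.
  have key : ∀ t₁ ∈ Set.Icc (0:ℝ) 1, ∀ t₂ ∈ Set.Icc (0:ℝ) 1,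
      η (A + t₂ • η B A) (A + t₁ • η B A) = (t₂ - t₁) • η B A := by
    intro t₁ ht₁ t₂ ht₂
    rcases le_or_gt t₁ t₂ with hle | hlt
    · rcases eq_or_lt_of_le ht₂.1 with h0 | hpos
      · -- t₂ = 0, hence t₁ = 0
        have ht10 : t₁ = 0 := le_antisymm (hle.trans h0.symm.le) ht₁.1
        have h := hC1 A hA B hB 0 ⟨le_refl 0, zero_le_one⟩
        simp only [zero_smul, add_zero, neg_zero] at h
        rw [← h0, ht10]
        simpa using h
      · -- t₂ > 0
        set s : ℝ := (t₂ - t₁) / t₂ with hs_def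
        have ht2ne : t₂ ≠ 0 := ne_of_gt hpos
        have hst : s * t₂ = t₂ - t₁ := div_mul_cancel₀ _ ht2ne
        have hs : s ∈ Set.Icc (0:ℝ) 1 :=
          ⟨div_nonneg (by linarith) hpos.le, by rw [div_le_one hpos]; linarith [ht₁.1]⟩
        have h1 := hC1 A hA B hB t₂ ht₂
        have h2 := hC1 _ (hinvex A hA B hB t₂ ht₂) A hA s hs
        rw [h1] at h2
        have e1 : A + t₂ • η B A + s • ((-t₂) • η B A) = A + t₁ • η B A := by
          rw [smul_smul, show s * (-t₂) = t₁ - t₂ by rw [mul_neg, hst]; ring,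
            add_assoc, ← add_smul, show t₂ + (t₁ - t₂) = t₁ by ring]
        rw [e1] at h2
        rw [h2, smul_smul]
        congr 1
        rw [neg_mul_neg, hst]
    · -- t₂ < t₁, hence t₂ < 1
      have h2lt1 : t₂ < 1 := lt_of_lt_of_le hlt ht₁.2
      set s : ℝ := (t₁ - t₂) / (1 - t₂) with hs_def
      have hne : (1 - t₂ : ℝ) ≠ 0 := by linarith
      have hst : s * (1 - t₂) = t₁ - t₂ := div_mul_cancel₀ _ hne
      have hs : s ∈ Set.Icc (0:ℝ) 1 :=
        ⟨div_nonneg (by linarith) (by linarith),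
         by rw [div_le_one (by linarith)]; linarith [ht₁.2]⟩
      have h1 := hC2 A hA B hB t₂ ht₂
      have h2 := hC1 _ (hinvex A hA B hB t₂ ht₂) B hB s hs
      rw [h1] at h2
      have e1 : A + t₂ • η B A + s • ((1 - t₂) • η B A) = A + t₁ • η B A := by
        rw [smul_smul, hst, add_assoc, ← add_smul, show t₂ + (t₁ - t₂) = t₁ by ring]
      rw [e1] at h2
      rw [h2, smul_smul]
      congr 1
      rw [neg_mul, hst]
      ring
  rintro C₁ ⟨t₁, ht₁, rfl⟩ C₂ ⟨t₂, ht₂, rfl⟩ lam hlam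
  have hη := key t₁ ht₁ t₂ ht₂
  set t₃ : ℝ := (1 - lam) * t₁ + lam * t₂ with ht3_def
  have ht₃ : t₃ ∈ Set.Icc (0:ℝ) 1 := by
    constructor
    · have := mul_nonneg (by linarith [hlam.2] : (0:ℝ) ≤ 1 - lam) ht₁.1
      have := mul_nonneg hlam.1 ht₂.1
      linarith
    · nlinarith [ht₁.2, ht₂.2, hlam.1, hlam.2]
  have harg : A + t₁ • η B A + lam • η (A + t₂ • η B A) (A + t₁ • η B A)
      = A + t₃ • η B A := by
    rw [hη, smul_smul, add_assoc, ← add_smul,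
      show t₁ + lam * (t₂ - t₁) = t₃ by rw [ht3_def]; ring]
  rw [harg]
  have hsa : ∀ t : ℝ, IsSelfAdjoint (cfc f (A + t • η B A)) := fun t => cfc_predicate f _
  rw [ContinuousLinearMap.le_def]
  constructor
  · exact (((aux_sa_smul _ _ (hsa t₁)).add (aux_sa_smul _ _ (hsa t₂))).sub (hsa t₃)).isSymmetric
  · intro x
    rw [ContinuousLinearMap.reApplyInnerSelf_apply]
    rcases eq_or_ne x 0 with rfl | hx
    · simp
    · have hxnorm : (0:ℝ) < ‖x‖ := norm_pos_iff.mpr hx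
      set u : H := ((‖x‖⁻¹ : ℝ) : ℂ) • x with hu_def
      have hu : ‖u‖ = 1 := by
        rw [hu_def, norm_smul, Complex.norm_real, Real.norm_eq_abs,
          abs_of_pos (inv_pos.mpr hxnorm), inv_mul_cancel₀ (ne_of_gt hxnorm)]
      have hxu : x = (‖x‖ : ℂ) • u := by
        rw [hu_def, smul_smul, ← Complex.ofReal_mul,
          mul_inv_cancel₀ (ne_of_gt hxnorm), Complex.ofReal_one, one_smul]
      have scale : ∀ T : H →L[ℂ] H,
          RCLike.re ⟪T x, x⟫_ℂ = ‖x‖ ^ 2 * RCLike.re ⟪T u, u⟫_ℂ := by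
        intro T
        conv_lhs => rw [hxu]
        rw [map_smul, inner_smul_left, inner_smul_right, Complex.conj_ofReal,
          ← mul_assoc, ← Complex.ofReal_mul]
        simp only [RCLike.re_to_complex, Complex.re_ofReal_mul]
        ring
      have hcv := (hconv u hu).2 ht₁ ht₂ (by linarith [hlam.2] : (0:ℝ) ≤ 1 - lam) hlam.1
        (by ring)
      simp only [smul_eq_mul] at hcv
      have expand : RCLike.re ⟪((1 - lam) • cfc f (A + t₁ • η B A) + lam • cfc f (A + t₂ • η B A)
          - cfc f (A + t₃ • η B A)) x, x⟫_ℂ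
          = (1 - lam) * RCLike.re ⟪(cfc f (A + t₁ • η B A)) x, x⟫_ℂ
            + lam * RCLike.re ⟪(cfc f (A + t₂ • η B A)) x, x⟫_ℂ
            - RCLike.re ⟪(cfc f (A + t₃ • η B A)) x, x⟫_ℂ := by
        rw [ContinuousLinearMap.sub_apply, ContinuousLinearMap.add_apply, inner_sub_left,
          inner_add_left, map_sub, map_add, aux_re_smul, aux_re_smul]
      rw [expand, scale, scale, scale]
      have hφ : RCLike.re ⟪(cfc f (A + t₃ • η B A)) u, u⟫_ℂ
          ≤ (1 - lam) * RCLike.re ⟪(cfc f (A + t₁ • η B A)) u, u⟫_ℂ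
            + lam * RCLike.re ⟪(cfc f (A + t₂ • η B A)) u, u⟫_ℂ := hcv
      nlinarith [sq_nonneg ‖x‖]
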